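/- Let R be a commutative local integral domain of Krull dimension 1 with field of fractions Q. Then every finitely generated torsion-free R-module of rank one has local endomorphism ring if and only if the integral closure of R in Q is a local ring. -/

import Mathlib

universe u

set_option synthInstance.maxHeartbeats 1000000
set_option maxHeartbeats 1000000

section stmt16aux

variable {R : Type u} [CommRing R] [IsDomain R]
variable {M : Type u} [AddCommGroup M] [Module R M]

private theorem stmt16_cross (f : M →ₗ[R] FractionRing R) (hf : Function.Injective f)
    (φ : Module.End R M) (m m' : M) : f m' * f (φ m) = f m * f (φ m') := by
  set Q := FractionRing R
  by_cases hm : f m = 0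
  · have : m = 0 := hf (by simpa using hm)
    simp [this, hm]
  by_cases hm' : f m' = 0
  · have : m' = 0 := hf (by simpa using hm')
    simp [this, hm']
  obtain ⟨⟨a, s⟩, h1⟩ := IsLocalization.surj (nonZeroDivisors R) (f m)
  obtain ⟨⟨b, t⟩, h2⟩ := IsLocalization.surj (nonZeroDivisors R) (f m')
  have hs : algebraMap R Q s ≠ 0 := IsFractionRing.to_map_ne_zero_of_mem_nonZeroDivisors s.2
  have ha : a ≠ 0 := by
    rintro rfl
    exact hm (by simpa [hs] using mul_eq_zero.mp (h1.trans (map_zero _)))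
  have hb : b ≠ 0 := by
    rintro rfl
    exact hm' (by simpa [IsFractionRing.to_map_ne_zero_of_mem_nonZeroDivisors t.2] using
      mul_eq_zero.mp (h2.trans (map_zero _)))
  have hr : (b * s.1) • m = (a * t.1) • m' := by
    apply hf
    rw [map_smul, map_smul, Algebra.smul_def, Algebra.smul_def, map_mul, map_mul]
    calc algebraMap R Q b * algebraMap R Q s.1 * f m
        = algebraMap R Q b * (f m * algebraMap R Q s.1) := by ring
      _ = algebraMap R Q a * (algebraMap R Q t.1 * f m') := by
          rw [h1]; rw [show algebraMap R Q t.1 * f m' = f m' * algebraMap R Q t.1 by ring, h2]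
          ring
      _ = algebraMap R Q a * algebraMap R Q t.1 * f m' := by ring
  have hr2 : (b * s.1) • φ m = (a * t.1) • φ m' := by
    rw [← map_smul φ, ← map_smul φ, hr]
  have H1 : algebraMap R Q (b * s.1) * f m = algebraMap R Q (a * t.1) * f m' := by
    have := congrArg f hr; rwa [map_smul, map_smul, Algebra.smul_def, Algebra.smul_def] at this
  have H2 : algebraMap R Q (b * s.1) * f (φ m) = algebraMap R Q (a * t.1) * f (φ m') := by
    have := congrArg f hr2; rwa [map_smul, map_smul, Algebra.smul_def, Algebra.smul_def] at this
  have hbs : algebraMap R Q (b * s.1) ≠ 0 := by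
    simp only [map_mul]
    exact mul_ne_zero (fun h => hb (IsFractionRing.injective R Q (h.trans (map_zero _).symm))) hs
  apply mul_left_cancel₀ hbs
  linear_combination f m' * H2 - f (φ m') * H1

private theorem stmt16_key (f : M →ₗ[R] FractionRing R) (hf : Function.Injective f)
    {m₀ : M} (hm₀ : f m₀ ≠ 0) (φ : Module.End R M) (m : M) :
    f (φ m) = f (φ m₀) / f m₀ * f m := by
  have := stmt16_cross f hf φ m m₀
  rw [div_mul_eq_mul_div, eq_div_iff hm₀]
  linear_combination this

/-- The canonical embedding of the endomorphism ring of a torsion-free module of rank one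
into the fraction field. -/
private noncomputable def stmt16_toQ (f : M →ₗ[R] FractionRing R) (hf : Function.Injective f)
    (m₀ : M) (hm₀ : f m₀ ≠ 0) : Module.End R M →ₐ[R] FractionRing R where
  toFun φ := f (φ m₀) / f m₀
  map_one' := div_self hm₀
  map_mul' φ ψ := by
    show f (φ (ψ m₀)) / f m₀ = _
    rw [stmt16_key f hf hm₀ φ (ψ m₀)]
    ring
  map_zero' := by simp
  map_add' φ ψ := by simp [add_div]
  commutes' r := by
    show f (r • m₀) / f m₀ = _
    rw [map_smul, Algebra.smul_def]
    field_simp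

private theorem stmt16_toQ_inj (f : M →ₗ[R] FractionRing R) (hf : Function.Injective f)
    (m₀ : M) (hm₀ : f m₀ ≠ 0) : Function.Injective (stmt16_toQ f hf m₀ hm₀) := by
  intro φ ψ h
  ext m
  apply hf
  rw [stmt16_key f hf hm₀ φ m, stmt16_key f hf hm₀ ψ m]
  exact congrArg (· * f m) h

private theorem stmt16_toQ_apply (f : M →ₗ[R] FractionRing R) (hf : Function.Injective f)
    (m₀ : M) (hm₀ : f m₀ ≠ 0) (φ : Module.End R M) (m : M) :
    f (φ m) = stmt16_toQ f hf m₀ hm₀ φ * f m := stmt16_key f hf hm₀ φ m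

private theorem stmt16_inv_mem_adjoin {K : Type*} [Field K] [Algebra R K] {q y : K}
    (h : q * y = 1) (hy : IsIntegral R y) : y ∈ Algebra.adjoin R {q} := by
  obtain ⟨p, pm, hp⟩ := hy
  set n := p.natDegree with hn_def
  have hn : 1 ≤ n := by
    by_contra hc
    have h0 : n = 0 := by omega
    have : p = 1 := (Polynomial.Monic.natDegree_eq_zero pm).mp h0
    rw [this] at hp
    simp at hp
  have h0 : (∑ i ∈ Finset.range (n + 1), p.coeff i • y ^ i) = 0 := by
    rw [← Polynomial.aeval_eq_sum_range]; exact hp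
  rw [Finset.sum_range_succ, pm.coeff_natDegree, one_smul] at h0
  have hyq : ∀ i < n, y ^ i * q ^ (n - 1) = q ^ (n - 1 - i) := by
    intro i hi
    have hsplit : q ^ (n - 1) = q ^ i * q ^ (n - 1 - i) := by rw [← pow_add]; congr 1; omega
    rw [hsplit, ← mul_assoc, ← mul_pow, mul_comm y q, h, one_pow, one_mul]
  have hyn : y ^ n * q ^ (n - 1) = y := by
    have : y ^ n = y ^ (n - 1) * y := by rw [← pow_succ]; congr 1; omega
    rw [this, mul_comm (y ^ (n-1)) y, mul_assoc, ← mul_pow, mul_comm y q, h, one_pow, mul_one]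
  have hmain : y = -∑ i ∈ Finset.range n, p.coeff i • q ^ (n - 1 - i) := by
    have := congrArg (· * q ^ (n - 1)) h0
    simp only [add_mul, Finset.sum_mul, smul_mul_assoc, zero_mul] at this
    rw [hyn] at this
    rw [Finset.sum_congr rfl (fun i hi => by
      rw [hyq i (Finset.mem_range.mp hi)])] at this
    rw [eq_neg_iff_add_eq_zero, add_comm]; exact this
  rw [hmain]
  exact Subalgebra.neg_mem _ (Subalgebra.sum_mem _ (fun i _ =>
    Subalgebra.smul_mem _ (pow_mem (Algebra.self_mem_adjoin_singleton R q) _) _))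

end stmt16aux

/-- Let `R` be a commutative local domain of Krull dimension 1 with
fraction field `Q`.  Then every finitely generated torsion-free `R`-module of rank one has
local endomorphism ring if and only if the integral closure of `R` in `Q` is a local
ring. -/
theorem stmt16 (R : Type u) [CommRing R] [IsDomain R] [IsLocalRing R]
    (hdim : ringKrullDim R = 1) :
    (∀ (M : Type u) (_ : AddCommGroup M) (_ : Module R M)
        (_ : Module.Finite R M) (_ : NoZeroSMulDivisors R M),
      Module.rank (FractionRing R) (LocalizedModule (nonZeroDivisors R) M) = 1 →
      IsLocalRing (Module.End R M)) ↔
    IsLocalRing (integralClosure R (FractionRing R)) := by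
  constructor
  · -- forward direction
    intro H
    haveI : NoZeroSMulDivisors R (FractionRing R) :=
      ⟨fun {c x} h => by
        rw [Algebra.smul_def] at h
        exact (mul_eq_zero.mp h).imp_left
          (fun h' => (map_eq_zero_iff _ (IsFractionRing.injective R (FractionRing R))).mp h')⟩
    apply IsLocalRing.of_isUnit_or_isUnit_one_sub_self
    rintro ⟨x, hx⟩
    have hx' : IsIntegral R x := hx
    have hfg : (Subalgebra.toSubmodule (Algebra.adjoin R {x})).FG := hx'.fg_adjoin_singleton
    haveI hfin : Module.Finite R (Algebra.adjoin R {x}) := Module.Finite.iff_fg.mpr hfg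
    let ι : Algebra.adjoin R {x} →ₗ[R] FractionRing R := (Algebra.adjoin R {x}).val.toLinearMap
    have hι : Function.Injective ι := Subtype.val_injective
    haveI htf : NoZeroSMulDivisors R (Algebra.adjoin R {x}) :=
      Function.Injective.noZeroSMulDivisors ι hι (map_zero _) (fun _ _ => rfl)
    haveI hQloc : IsLocalizedModule (nonZeroDivisors R) (Algebra.linearMap R (FractionRing R)) :=
      (isLocalizedModule_iff_isLocalization' (nonZeroDivisors R) _).mpr inferInstance
    haveI hloc : IsLocalizedModule (nonZeroDivisors R) ι := by
      constructor
      · exact fun s => hQloc.map_units s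
      · intro y
        obtain ⟨⟨a, s⟩, hy⟩ := IsLocalization.surj (nonZeroDivisors R) y
        refine ⟨⟨⟨algebraMap R (FractionRing R) a, (Algebra.adjoin R {x}).algebraMap_mem a⟩, s⟩, ?_⟩
        rw [Submonoid.smul_def, Algebra.smul_def, mul_comm]
        exact hy
      · intro m m' h
        exact ⟨1, by rw [hι h]⟩
    have e : LocalizedModule (nonZeroDivisors R) (Algebra.adjoin R {x}) ≃ₗ[R] FractionRing R :=
      IsLocalizedModule.iso _ ι
    have e2 : LocalizedModule (nonZeroDivisors R) (Algebra.adjoin R {x}) ≃ₗ[FractionRing R]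
        FractionRing R :=
      LinearEquiv.ofLinear
        (e.toLinearMap.extendScalarsOfIsLocalization (nonZeroDivisors R) (FractionRing R))
        (e.symm.toLinearMap.extendScalarsOfIsLocalization (nonZeroDivisors R) (FractionRing R))
        (by refine LinearMap.ext fun z => ?_; simp)
        (by refine LinearMap.ext fun z => ?_; simp)
    have hrank : Module.rank (FractionRing R)
        (LocalizedModule (nonZeroDivisors R) (Algebra.adjoin R {x})) = 1 := by
      rw [e2.rank_eq, Module.rank_self]
    haveI hEnd : IsLocalRing (Module.End R (Algebra.adjoin R {x})) :=
      H _ _ _ hfin htf hrank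
    have hι1 : ι 1 = 1 := map_one (Algebra.adjoin R {x}).val
    have hm₀ : ι 1 ≠ 0 := by rw [hι1]; exact one_ne_zero
    let a₀ : Algebra.adjoin R {x} := ⟨x, Algebra.self_mem_adjoin_singleton R x⟩
    let φ : Module.End R (Algebra.adjoin R {x}) := LinearMap.mulLeft R a₀
    have hφ : stmt16_toQ ι hι 1 hm₀ φ = x := by
      show ι (φ 1) / ι 1 = x
      rw [hι1, div_one]
      show ((a₀ * 1 : Algebra.adjoin R {x}) : FractionRing R) = x
      rw [mul_one]
    have key : ∀ ψ : Module.End R (Algebra.adjoin R {x}),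
        stmt16_toQ ι hι 1 hm₀ ψ ∈ integralClosure R (FractionRing R) := by
      intro ψ
      have h1 : stmt16_toQ ι hι 1 hm₀ ψ = ι (ψ 1) := by
        show ι (ψ 1) / ι 1 = ι (ψ 1)
        rw [hι1, div_one]
      rw [h1]
      exact adjoin_le_integralClosure hx' (ψ 1).2
    rcases IsLocalRing.isUnit_or_isUnit_of_add_one
      (show φ + (1 - φ) = 1 from add_sub_cancel φ 1) with h | h
    · left
      obtain ⟨u, hu⟩ := h
      let ψ : Module.End R (Algebra.adjoin R {x}) := ((u⁻¹ : _ˣ) : Module.End R _)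
      have h1 : φ * ψ = 1 := by rw [← hu]; exact u.mul_inv
      have h2 : x * stmt16_toQ ι hι 1 hm₀ ψ = 1 := by
        have h3 := congrArg (stmt16_toQ ι hι 1 hm₀) h1
        rw [map_mul, map_one, hφ] at h3
        exact h3
      exact IsUnit.of_mul_eq_one ⟨_, key ψ⟩ (Subtype.ext h2)
    · right
      obtain ⟨u, hu⟩ := h
      let ψ : Module.End R (Algebra.adjoin R {x}) := ((u⁻¹ : _ˣ) : Module.End R _)
      have h1 : (1 - φ) * ψ = 1 := by rw [← hu]; exact u.mul_inv
      have h2 : (1 - x) * stmt16_toQ ι hι 1 hm₀ ψ = 1 := by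
        have h3 := congrArg (stmt16_toQ ι hι 1 hm₀) h1
        rw [map_mul, map_one] at h3
        have h6 := congrArg (stmt16_toQ ι hι 1 hm₀) (sub_add_cancel 1 φ)
        rw [map_add, map_one, hφ] at h6
        rw [eq_sub_of_add_eq h6] at h3
        exact h3
      exact IsUnit.of_mul_eq_one ⟨_, key ψ⟩ (Subtype.ext h2)
  · -- reverse direction
    intro hloc M _ _ hfin htf hrank
    haveI : NoZeroSMulDivisors R (FractionRing R) :=
      ⟨fun {c x} h => by
        rw [Algebra.smul_def] at h
        exact (mul_eq_zero.mp h).imp_left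
          (fun h' => (map_eq_zero_iff _ (IsFractionRing.injective R (FractionRing R))).mp h')⟩
    -- M is nontrivial
    have hM : ∃ m₀ : M, m₀ ≠ 0 := by
      by_contra hc
      push_neg at hc
      haveI : Subsingleton (LocalizedModule (nonZeroDivisors R) M) := by
        constructor
        intro z w
        induction z using LocalizedModule.induction_on with
        | h m s =>
          induction w using LocalizedModule.induction_on with
          | h m' s' =>
            rw [hc m, hc m', LocalizedModule.zero_mk, LocalizedModule.zero_mk]
      rw [rank_subsingleton'] at hrank
      exact one_ne_zero hrank.symm
    -- construct the embedding into Q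
    haveI : Module.Finite (FractionRing R) (LocalizedModule (nonZeroDivisors R) M) :=
      Module.finite_of_rank_eq_one hrank
    have hfr : Module.finrank (FractionRing R) (LocalizedModule (nonZeroDivisors R) M) = 1 :=
      Module.finrank_eq_of_rank_eq hrank
    let e : LocalizedModule (nonZeroDivisors R) M ≃ₗ[FractionRing R] FractionRing R :=
      LinearEquiv.ofFinrankEq _ _ (by rw [hfr, Module.finrank_self])
    let f : M →ₗ[R] FractionRing R :=
      (e.restrictScalars R).toLinearMap ∘ₗ LocalizedModule.mkLinearMap (nonZeroDivisors R) M
    have hmk : Function.Injective (LocalizedModule.mkLinearMap (nonZeroDivisors R) M) := by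
      intro m m' hmm
      have : LocalizedModule.mk m (1 : nonZeroDivisors R) =
          LocalizedModule.mk m' (1 : nonZeroDivisors R) := hmm
      obtain ⟨u, hu⟩ := LocalizedModule.mk_eq.mp this
      simp only [one_smul] at hu
      have : u.1 • (m - m') = 0 := by
        rw [smul_sub, ← Submonoid.smul_def, ← Submonoid.smul_def, hu, sub_self]
      rcases smul_eq_zero.mp this with h | h
      · exact absurd h (nonZeroDivisors.ne_zero u.2)
      · exact sub_eq_zero.mp h
    have hf : Function.Injective f :=
      ((e.restrictScalars R).injective).comp hmk
    obtain ⟨m₀, hm₀'⟩ := hM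
    have hm₀ : f m₀ ≠ 0 := fun h => hm₀' (hf (by rw [h, map_zero]))
    -- integrality of the image of toQ
    have hne : LinearMap.range f ≠ ⊥ := by
      intro h
      apply hm₀
      have : f m₀ ∈ LinearMap.range f := ⟨m₀, rfl⟩
      rwa [h, Submodule.mem_bot] at this
    have hfg : (LinearMap.range f).FG := by
      rw [LinearMap.range_eq_map]
      exact (Module.finite_def.mp hfin).map f
    have hint : ∀ ψ : Module.End R M,
        stmt16_toQ f hf m₀ hm₀ ψ ∈ integralClosure R (FractionRing R) := by
      intro ψ
      refine isIntegral_of_smul_mem_submodule (LinearMap.range f) hne hfg _ ?_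
      rintro _ ⟨m, rfl⟩
      rw [smul_eq_mul, ← stmt16_toQ_apply f hf m₀ hm₀]
      exact ⟨ψ m, rfl⟩
    -- the key step: a unit in the integral closure gives a unit endomorphism
    have hunit : ∀ ψ : Module.End R M,
        IsUnit (⟨stmt16_toQ f hf m₀ hm₀ ψ, hint ψ⟩ : integralClosure R (FractionRing R)) →
        IsUnit ψ := by
      intro ψ hψ
      obtain ⟨u, hu⟩ := hψ
      have hyint : IsIntegral R ((u⁻¹ : _ˣ) : integralClosure R (FractionRing R)).1 :=
        ((u⁻¹ : _ˣ) : integralClosure R (FractionRing R)).2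
      have hqy : stmt16_toQ f hf m₀ hm₀ ψ *
          ((u⁻¹ : _ˣ) : integralClosure R (FractionRing R)).1 = 1 := by
        have := u.mul_inv
        rw [hu] at this
        exact congrArg Subtype.val this
      have hymem := stmt16_inv_mem_adjoin hqy hyint
      rw [Algebra.adjoin_singleton_eq_range_aeval] at hymem
      obtain ⟨P, hP⟩ := hymem
      have hP' : Polynomial.aeval (stmt16_toQ f hf m₀ hm₀ ψ) P =
          ((u⁻¹ : _ˣ) : integralClosure R (FractionRing R)).1 := hP
      refine isUnit_iff_exists.mpr ⟨Polynomial.aeval ψ P, ?_, ?_⟩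
      · apply stmt16_toQ_inj f hf m₀ hm₀
        rw [map_mul, map_one, ← Polynomial.aeval_algHom_apply, hP']
        exact hqy
      · apply stmt16_toQ_inj f hf m₀ hm₀
        rw [map_mul, map_one, ← Polynomial.aeval_algHom_apply, hP', mul_comm]
        exact hqy
    -- conclude
    haveI : Nontrivial (Module.End R M) :=
      ⟨⟨0, 1, fun h => hm₀' (by simpa using (DFunLike.congr_fun h m₀).symm)⟩⟩
    refine ⟨fun {φ ψ} hφψ => ?_⟩
    have hsum : (⟨stmt16_toQ f hf m₀ hm₀ φ, hint φ⟩ : integralClosure R (FractionRing R)) +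
        ⟨stmt16_toQ f hf m₀ hm₀ ψ, hint ψ⟩ = 1 := by
      apply Subtype.ext
      show stmt16_toQ f hf m₀ hm₀ φ + stmt16_toQ f hf m₀ hm₀ ψ = 1
      rw [← map_add, hφψ, map_one]
    rcases IsLocalRing.isUnit_or_isUnit_of_add_one hsum with h | h
    · exact Or.inl (hunit φ h)
    · exact Or.inr (hunit ψ h)
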